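/- Let A be a self-adjoint operator on a complex Hilbert space, α > 0 and Z ∈ ℝ, and let L_Z = (π/(2α))^{-1/4} exp(-α(A - Z)²) (functional calculus). Then for every unit vector ψ in H, the function Z ↦ ⟨L_Z ψ, L_Z ψ⟩ is a probability density on ℝ, i.e. it is nonnegative and its integral over Z ∈ ℝ equals 1. -/

import Mathlib

open MeasureTheory Real
open scoped InnerProductSpace

section aux
variable {H : Type*} [NormedAddCommGroup H] [InnerProductSpace ℂ H] [CompleteSpace H]

/-- The quadratic-form functional `f ↦ re ⟪ψ, cfcHom hA f ψ⟫`. -/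
noncomputable def collapsePhi (A : H →L[ℂ] H) (hA : IsSelfAdjoint A) (ψ : H) :
    C(spectrum ℝ A, ℝ) →L[ℝ] ℝ :=
  LinearMap.mkContinuous
    { toFun := fun f => Complex.re (⟪ψ, cfcHom hA f ψ⟫_ℂ)
      map_add' := by intro f g; simp [inner_add_right]
      map_smul' := by
        intro r f
        show (⟪ψ, (cfcHom hA (r • f)) ψ⟫_ℂ).re = (RingHom.id ℝ) r • (⟪ψ, (cfcHom hA f) ψ⟫_ℂ).re
        rw [_root_.map_smul, ContinuousLinearMap.smul_apply,
          ← algebraMap_smul ℂ r ((cfcHom hA f) ψ), inner_smul_right,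
          Complex.coe_algebraMap, Complex.re_ofReal_mul, RingHom.id_apply, smul_eq_mul] }
    (‖ψ‖ ^ 2)
    (by
      intro f
      have h1 : ‖cfcHom hA f‖ = ‖f‖ :=
        (isometry_cfcHom A hA).norm_map_of_map_zero (map_zero _) f
      calc ‖Complex.re (⟪ψ, cfcHom hA f ψ⟫_ℂ)‖ ≤ ‖⟪ψ, cfcHom hA f ψ⟫_ℂ‖ := by
            simpa using Complex.abs_re_le_norm _
        _ ≤ ‖ψ‖ * ‖cfcHom hA f ψ‖ := norm_inner_le_norm _ _
        _ ≤ ‖ψ‖ * (‖cfcHom hA f‖ * ‖ψ‖) := by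
            gcongr; exact (cfcHom hA f).le_opNorm ψ
        _ = ‖ψ‖ ^ 2 * ‖f‖ := by rw [h1]; ring)

lemma collapsePhi_apply (A : H →L[ℂ] H) (hA : IsSelfAdjoint A) (ψ : H)
    (f : C(spectrum ℝ A, ℝ)) :
    collapsePhi A hA ψ f = Complex.re (⟪ψ, cfcHom hA f ψ⟫_ℂ) := rfl

end aux

set_option maxHeartbeats 1000000 in
theorem collapse_probability_density {H : Type*} [NormedAddCommGroup H]
    [InnerProductSpace ℂ H] [CompleteSpace H]
    (A : H →L[ℂ] H) (hA : IsSelfAdjoint A) (α : ℝ) (hα : 0 < α)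
    (ψ : H) (hψ : ‖ψ‖ = 1) :
    (∀ Z : ℝ, 0 ≤
      ‖((Real.pi / (2 * α)) ^ (-(1 : ℝ) / 4) •
          cfc (fun t : ℝ => Real.exp (-α * (t - Z) ^ 2)) A) ψ‖ ^ 2) ∧
    (∫ Z : ℝ,
      ‖((Real.pi / (2 * α)) ^ (-(1 : ℝ) / 4) •
          cfc (fun t : ℝ => Real.exp (-α * (t - Z) ^ 2)) A) ψ‖ ^ 2) = 1 := by
  refine ⟨fun Z => by positivity, ?_⟩
  haveI : Nontrivial H := nontrivial_of_ne ψ 0 (by intro h; rw [h] at hψ; simp at hψ)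
  have hπ : (0 : ℝ) < Real.pi / (2 * α) := div_pos Real.pi_pos (by linarith)
  set c : ℝ := (Real.pi / (2 * α)) ^ (-(1 : ℝ) / 4) with hc
  have hcpos : 0 < c := Real.rpow_pos_of_pos hπ _
  -- the two-variable continuous function and its curried form
  set F : C(ℝ × spectrum ℝ A, ℝ) :=
    ⟨fun p => Real.exp (-(2 * α) * ((p.2 : ℝ) - p.1) ^ 2), by fun_prop⟩ with hF
  set G : C(ℝ, C(spectrum ℝ A, ℝ)) := F.curry with hG
  have hGapp : ∀ (Z : ℝ) (t : spectrum ℝ A),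
      G Z t = Real.exp (-(2 * α) * ((t : ℝ) - Z) ^ 2) := fun _ _ => rfl
  -- integrability of G
  have hGbound : ∀ Z : ℝ, ‖G Z‖ ≤ Real.exp (4 * α * ‖A‖ ^ 2) * Real.exp (-α * Z ^ 2) := by
    intro Z
    rw [← Real.exp_add]
    refine (ContinuousMap.norm_le _ (Real.exp_pos _).le).2 fun t => ?_
    rw [hGapp, Real.norm_eq_abs, Real.abs_exp, Real.exp_le_exp]
    have ht : |(t : ℝ)| ≤ ‖A‖ := by
      simpa using spectrum.norm_le_norm_of_mem t.2
    have h1 : (t : ℝ) ^ 2 ≤ ‖A‖ ^ 2 := sq_le_sq' (by linarith [(abs_le.1 ht).1]) (abs_le.1 ht).2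
    nlinarith [sq_nonneg (Z - 2 * (t : ℝ))]
  have hGint : Integrable (fun Z => G Z) := by
    refine Integrable.mono' ((integrable_exp_neg_mul_sq hα).const_mul _)
      G.continuous.aestronglyMeasurable (Filter.Eventually.of_forall hGbound)
  -- pointwise identity
  have key : ∀ Z : ℝ,
      ‖(c • cfc (fun t : ℝ => Real.exp (-α * (t - Z) ^ 2)) A) ψ‖ ^ 2
        = c ^ 2 * collapsePhi A hA ψ (G Z) := by
    intro Z
    set T := cfc (fun t : ℝ => Real.exp (-α * (t - Z) ^ 2)) A with hT
    have hTsa : IsSelfAdjoint T := cfc_predicate _ A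
    have hmul : T * T = cfcHom hA (G Z) := by
      rw [hT, ← cfc_mul (fun t : ℝ => Real.exp (-α * (t - Z) ^ 2)) _ A]
      have hfun : (fun t : ℝ => Real.exp (-α * (t - Z) ^ 2) * Real.exp (-α * (t - Z) ^ 2))
          = fun t : ℝ => Real.exp (-(2 * α) * (t - Z) ^ 2) := by
        funext t; rw [← Real.exp_add]; congr 1; ring
      rw [hfun, cfc_apply (fun t : ℝ => Real.exp (-(2 * α) * (t - Z) ^ 2)) A hA (by fun_prop)]
      congr 1
    have hinner : ⟪T ψ, T ψ⟫_ℂ = ⟪ψ, (T * T) ψ⟫_ℂ :=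
      calc ⟪T ψ, T ψ⟫_ℂ = ⟪(ContinuousLinearMap.adjoint T) ψ, T ψ⟫_ℂ := by
            rw [hTsa.adjoint_eq]
        _ = ⟪ψ, T (T ψ)⟫_ℂ := ContinuousLinearMap.adjoint_inner_left T (T ψ) ψ
        _ = ⟪ψ, (T * T) ψ⟫_ℂ := by rw [ContinuousLinearMap.mul_apply]
    have hnorm : ‖T ψ‖ ^ 2 = collapsePhi A hA ψ (G Z) := by
      rw [collapsePhi_apply, ← hmul, ← hinner, ← inner_self_eq_norm_sq (𝕜 := ℂ) (T ψ)]
      rfl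
    rw [ContinuousLinearMap.smul_apply, norm_smul, Real.norm_eq_abs,
      abs_of_pos hcpos, mul_pow, hnorm]
  -- compute the Bochner integral of G
  have hI : (∫ Z : ℝ, G Z) = ContinuousMap.const _ (Real.sqrt (Real.pi / (2 * α))) := by
    ext t
    have h1 : (∫ Z : ℝ, G Z) t = ∫ Z : ℝ, G Z t := by
      have := (ContinuousMap.evalCLM (M := ℝ) ℝ t).integral_comp_comm hGint
      exact this.symm
    rw [h1]
    simp only [hGapp]
    have h2 : (∫ Z : ℝ, Real.exp (-(2 * α) * ((t : ℝ) - Z) ^ 2))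
        = ∫ x : ℝ, Real.exp (-(2 * α) * x ^ 2) :=
      integral_sub_left_eq_self (fun x => Real.exp (-(2 * α) * x ^ 2)) volume (t : ℝ)
    rw [h2, integral_gaussian]
    rfl
  -- value on constants
  have hconst : collapsePhi A hA ψ (ContinuousMap.const _ (Real.sqrt (Real.pi / (2 * α))))
      = Real.sqrt (Real.pi / (2 * α)) := by
    have hc1 : (ContinuousMap.const (spectrum ℝ A) (Real.sqrt (Real.pi / (2 * α))))
        = Real.sqrt (Real.pi / (2 * α)) • (1 : C(spectrum ℝ A, ℝ)) := by
      ext x; simp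
    rw [collapsePhi_apply, hc1, _root_.map_smul, map_one]
    simp only [ContinuousLinearMap.smul_apply, ContinuousLinearMap.one_apply,
      RCLike.real_smul_eq_coe_smul (K := ℂ), inner_smul_right,
      inner_self_eq_norm_sq_to_K, hψ]
    simp
  calc (∫ Z : ℝ, ‖(c • cfc (fun t : ℝ => Real.exp (-α * (t - Z) ^ 2)) A) ψ‖ ^ 2)
      = ∫ Z : ℝ, c ^ 2 * collapsePhi A hA ψ (G Z) := by simp only [key]
    _ = c ^ 2 * ∫ Z : ℝ, collapsePhi A hA ψ (G Z) := integral_const_mul _ _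
    _ = c ^ 2 * collapsePhi A hA ψ (∫ Z : ℝ, G Z) := by
        rw [(collapsePhi A hA ψ).integral_comp_comm hGint]
    _ = c ^ 2 * Real.sqrt (Real.pi / (2 * α)) := by rw [hI, hconst]
    _ = 1 := by
        rw [hc, Real.sqrt_eq_rpow, ← Real.rpow_natCast _ 2, ← Real.rpow_mul hπ.le,
          ← Real.rpow_add hπ]
        norm_num
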